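/- Let (X,S) be an association scheme, (Y,T) a 3-equivalenced association scheme with |T| > 2, x₀ ∈ X, y₀ ∈ Y, and fix well-ordering enumerations of the sets y₀t (t ∈ T_3). Then the linear span of {G_{y₀t, y₀t'} : t, t' ∈ T_3} is a two-sided ideal of the Terwilliger algebra T(S≀T) of the wreath product at (x₀,y₀), the matrices G_{y₀t, y₀t'} satisfy G_{y₀t, y₀t'} · G_{y₀t''', y₀t''} = δ_{t', t'''} G_{y₀t, y₀t''}, and the linear map sending G_{y₀t, y₀t'} to the matrix unit E_{t,t'} is an algebra isomorphism from this span onto the full matrix algebra Mat_{T_3}(ℂ). -/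

import Mathlib

open Matrix BigOperators Kronecker
open scoped Classical

section Defs

variable {Z : Type*} [Fintype Z] [DecidableEq Z]

/-- The identity (diagonal) relation on `Z`. -/
def diagRel (Z : Type*) [Fintype Z] [DecidableEq Z] : Finset (Z × Z) :=
  Finset.univ.filter fun p => p.1 = p.2

/-- The converse relation. -/
def convRel (s : Finset (Z × Z)) : Finset (Z × Z) := s.image fun p => (p.2, p.1)

/-- The intersection number `p_{st}^u`, computed at an arbitrary pair of `u`. -/
noncomputable def pNum (s t u : Finset (Z × Z)) : ℕ :=
  if h : u.Nonempty then
    (Finset.univ.filter fun z => (h.choose.1, z) ∈ s ∧ (z, h.choose.2) ∈ t).card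
  else 0

/-- The valency `n_s = p_{s s*}^{1}`. -/
noncomputable def valency (s : Finset (Z × Z)) : ℕ := pNum s (convRel s) (diagRel Z)

/-- The adjacency matrix of a relation. -/
def adjMat (s : Finset (Z × Z)) : Matrix Z Z ℂ :=
  Matrix.of fun x y => if (x, y) ∈ s then 1 else 0

/-- The diagonal 0/1 matrix of a subset. -/
def eps (U : Finset Z) : Matrix Z Z ℂ := Matrix.diagonal fun i => if i ∈ U then 1 else 0

/-- The all-ones matrix. -/
def allOnes (Z : Type*) : Matrix Z Z ℂ := Matrix.of fun _ _ => 1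

/-- `pointFiber x s = xs = {y : (x,y) ∈ s}`. -/
def pointFiber (x : Z) (s : Finset (Z × Z)) : Finset Z :=
  Finset.univ.filter fun y => (x, y) ∈ s

/-- An association scheme on a finite set `Z`: a partition of `Z × Z` into nonempty
relations containing the identity relation, closed under converse, and with
well-defined intersection numbers. -/
structure AssocScheme (Z : Type*) [Fintype Z] [DecidableEq Z] where
  rels : Finset (Finset (Z × Z))
  nonempty_mem : ∀ s ∈ rels, s.Nonempty
  cover : ∀ p : Z × Z, ∃ s ∈ rels, p ∈ s
  pairwise_disjoint : ∀ s ∈ rels, ∀ t ∈ rels, s ≠ t → Disjoint s t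
  id_mem : diagRel Z ∈ rels
  conv_mem : ∀ s ∈ rels, convRel s ∈ rels
  pconst : ∀ s ∈ rels, ∀ t ∈ rels, ∀ u ∈ rels, ∀ p ∈ u, ∀ q ∈ u,
    (Finset.univ.filter fun z => (p.1, z) ∈ s ∧ (z, p.2) ∈ t).card =
    (Finset.univ.filter fun z => (q.1, z) ∈ s ∧ (z, q.2) ∈ t).card

/-- A scheme is 3-equivalenced when it has more than one point and every
non-identity basic relation has valency 3. -/
def ThreeEquivalenced (B : AssocScheme Z) : Prop :=
  1 < Fintype.card Z ∧ ∀ t ∈ B.rels, t ≠ diagRel Z → valency t = 3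

/-- A scheme is k-equivalenced when it has more than one point and every
non-identity basic relation has valency k. -/
def KEquivalenced (B : AssocScheme Z) (k : ℕ) : Prop :=
  1 < Fintype.card Z ∧ ∀ t ∈ B.rels, t ≠ diagRel Z → valency t = k

/-- A scheme is imprimitive if some union of basic relations is an equivalence
relation different from the identity relation and from the full relation. -/
def Imprimitive (B : AssocScheme Z) : Prop :=
  ∃ R ⊆ B.rels, Equivalence (fun x y : Z => (x, y) ∈ R.sup id) ∧
    R.sup id ≠ diagRel Z ∧ R.sup id ≠ Finset.univ

/-- A coherent algebra: a subalgebra of the matrix algebra containing the all-ones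
matrix (and the identity), closed under conjugate transpose and Hadamard product. -/
def IsCoherent (𝒜 : Subalgebra ℂ (Matrix Z Z ℂ)) : Prop :=
  allOnes Z ∈ 𝒜 ∧ (∀ M ∈ 𝒜, Mᴴ ∈ 𝒜) ∧
  ∀ M ∈ 𝒜, ∀ N ∈ 𝒜, Matrix.hadamard M N ∈ 𝒜

/-- The one-point-extension algebra: the smallest coherent algebra containing all
adjacency matrices of the scheme and the diagonal matrix unit at `x`. -/
noncomputable def onePointAlg (B : AssocScheme Z) (x : Z) : Subalgebra ℂ (Matrix Z Z ℂ) :=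
  sInf {𝒜 | IsCoherent 𝒜 ∧ (∀ s ∈ B.rels, adjMat s ∈ 𝒜) ∧ eps {x} ∈ 𝒜}

/-- A matrix has only 0/1 entries. -/
def IsZeroOne (M : Matrix Z Z ℂ) : Prop := ∀ i j, M i j = 0 ∨ M i j = 1

/-- A basic relation matrix of a coherent algebra: a nonzero 0/1 matrix in the
algebra whose only 0/1 minorants in the algebra are 0 and itself. -/
def IsBasicMatrix (𝒜 : Subalgebra ℂ (Matrix Z Z ℂ)) (B : Matrix Z Z ℂ) : Prop :=
  B ∈ 𝒜 ∧ IsZeroOne B ∧ B ≠ 0 ∧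
  ∀ C ∈ 𝒜, IsZeroOne C → (∀ i j, C i j = 1 → B i j = 1) → C = 0 ∨ C = B

/-- The Terwilliger algebra of a scheme with respect to the base point `x`. -/
noncomputable def terwAlg (B : AssocScheme Z) (x : Z) : Subalgebra ℂ (Matrix Z Z ℂ) :=
  Algebra.adjoin ℂ
    ({M | ∃ s ∈ B.rels, M = adjMat s} ∪ {M | ∃ s ∈ B.rels, M = eps (pointFiber x s)})

/-- A central primitive idempotent of a (set underlying a) matrix algebra: a nonzero
central idempotent that is not the sum of two nonzero orthogonal central idempotents. -/
def IsCPI {n : Type*} [Fintype n] [DecidableEq n] (𝒜 : Set (Matrix n n ℂ))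
    (e : Matrix n n ℂ) : Prop :=
  e ∈ 𝒜 ∧ e ≠ 0 ∧ e * e = e ∧ (∀ a ∈ 𝒜, a * e = e * a) ∧
  ¬∃ f g : Matrix n n ℂ, f ∈ 𝒜 ∧ g ∈ 𝒜 ∧ f ≠ 0 ∧ g ≠ 0 ∧
    f * f = f ∧ g * g = g ∧ (∀ a ∈ 𝒜, a * f = f * a) ∧ (∀ a ∈ 𝒜, a * g = g * a) ∧
    f * g = 0 ∧ g * f = 0 ∧ e = f + g

/-- The trivial central primitive idempotent
`∑_{s∈S} n_s⁻¹ ε_{x s} J ε_{x s}` of the Terwilliger algebra. -/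
noncomputable def trivTerwIdem (B : AssocScheme Z) (x : Z) : Matrix Z Z ℂ :=
  ∑ s ∈ B.rels, ((valency s : ℂ)⁻¹) •
    (eps (pointFiber x s) * allOnes Z * eps (pointFiber x s))

/-- The adjacency algebra `A(S) = span{σ_s : s ∈ S}` as a set of matrices. -/
def adjAlgSet (B : AssocScheme Z) : Set (Matrix Z Z ℂ) :=
  ↑(Submodule.span ℂ {M | ∃ s ∈ B.rels, M = adjMat s})

end Defs

section Wreath

variable {X Y : Type*} [Fintype X] [DecidableEq X] [Fintype Y] [DecidableEq Y]

/-- Generators of the Terwilliger algebra of the wreath product at `(x₀, y₀)`. -/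
def wreathGens (A : AssocScheme X) (B : AssocScheme Y) (x₀ : X) (y₀ : Y) :
    Set (Matrix (X × Y) (X × Y) ℂ) :=
  {M | ∃ s ∈ A.rels, M = adjMat s ⊗ₖ (1 : Matrix Y Y ℂ)} ∪
  {M | ∃ s ∈ A.rels, M = eps (pointFiber x₀ s) ⊗ₖ eps ({y₀} : Finset Y)} ∪
  {M | ∃ t ∈ B.rels, t ≠ diagRel Y ∧ M = allOnes X ⊗ₖ adjMat t} ∪
  {M | ∃ t ∈ B.rels, t ≠ diagRel Y ∧ M = (1 : Matrix X X ℂ) ⊗ₖ eps (pointFiber y₀ t)}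

/-- The Terwilliger algebra of the wreath product at `(x₀, y₀)`. -/
noncomputable def wreathTerw (A : AssocScheme X) (B : AssocScheme Y) (x₀ : X) (y₀ : Y) :
    Subalgebra ℂ (Matrix (X × Y) (X × Y) ℂ) :=
  Algebra.adjoin ℂ (wreathGens A B x₀ y₀)

/-- The relation `s̃` of the wreath product coming from `s ∈ S`. -/
def tildeRel (s : Finset (X × X)) : Finset ((X × Y) × (X × Y)) :=
  Finset.univ.filter fun p => (p.1.1, p.2.1) ∈ s ∧ p.1.2 = p.2.2

/-- The relation `t̄` of the wreath product coming from `t ∈ T \ {1}`. -/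
def barRel (t : Finset (Y × Y)) : Finset ((X × Y) × (X × Y)) :=
  Finset.univ.filter fun p => (p.1.2, p.2.2) ∈ t

/-- The basic relations of the wreath product `S ≀ T`. -/
def wreathRels (A : AssocScheme X) (B : AssocScheme Y) :
    Finset (Finset ((X × Y) × (X × Y))) :=
  A.rels.image (tildeRel (Y := Y)) ∪ (B.rels.erase (diagRel Y)).image (barRel (X := X))

/-- The trivial central primitive idempotent
`e₀ = ∑_u n_u⁻¹ ε_{(x₀,y₀)u} J ε_{(x₀,y₀)u}` of `T(S ≀ T)`. -/
noncomputable def wreathTriv (A : AssocScheme X) (B : AssocScheme Y) (x₀ : X) (y₀ : Y) :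
    Matrix (X × Y) (X × Y) ℂ :=
  ∑ u ∈ wreathRels A B, ((valency u : ℂ)⁻¹) •
    (eps (pointFiber (x₀, y₀) u) * allOnes (X × Y) * eps (pointFiber (x₀, y₀) u))

/-- `ω = e^{2πi/3}`. -/
noncomputable def omega3 : ℂ := Complex.exp (2 * Real.pi * Complex.I / 3)

/-- The shifted matching matrix `∑_i E_{y_{t(i)}, y_{t'(i+k)}}` on `y₀t × y₀t'`. -/
noncomputable def cyc (enum : Finset (Y × Y) → Fin 3 → Y) (t t' : Finset (Y × Y))
    (k : Fin 3) : Matrix Y Y ℂ :=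
  ∑ i : Fin 3, Matrix.single (enum t i) (enum t' (i + k)) 1

/-- `G_{y₀t, y₀t'}`. -/
noncomputable def Gmat (X : Type*) [Fintype X] (enum : Finset (Y × Y) → Fin 3 → Y)
    (t t' : Finset (Y × Y)) : Matrix (X × Y) (X × Y) ℂ :=
  ((3 * (Fintype.card X : ℂ))⁻¹) •
    (allOnes X ⊗ₖ (cyc enum t t' 0 + omega3 • cyc enum t t' 1 + omega3 ^ 2 • cyc enum t t' 2))

/-- `G'_{y₀t, y₀t'}`. -/
noncomputable def Gmat' (X : Type*) [Fintype X] (enum : Finset (Y × Y) → Fin 3 → Y)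
    (t t' : Finset (Y × Y)) : Matrix (X × Y) (X × Y) ℂ :=
  ((3 * (Fintype.card X : ℂ))⁻¹) •
    (allOnes X ⊗ₖ (cyc enum t t' 0 + omega3 ^ 2 • cyc enum t t' 1 + omega3 • cyc enum t t' 2))

/-- `enum` enumerates each set `y₀t` (for non-identity `t`) by `Fin 3`. -/
def IsEnum (B : AssocScheme Y) (y₀ : Y) (enum : Finset (Y × Y) → Fin 3 → Y) : Prop :=
  ∀ t ∈ B.rels, t ≠ diagRel Y →
    Function.Injective (enum t) ∧ ∀ y, y ∈ pointFiber y₀ t ↔ ∃ i, enum t i = y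

/-- The enumerations are well-ordering: every basic relation matrix of the
one-point-extension algebra which is nonzero on `y₀t × y₀t'` restricts there to one of
the cyclic permutation matrices `I, C, C²`. -/
def IsWellOrdering (B : AssocScheme Y) (y₀ : Y) (enum : Finset (Y × Y) → Fin 3 → Y) : Prop :=
  IsEnum B y₀ enum ∧
  ∀ t ∈ B.rels, t ≠ diagRel Y → ∀ t' ∈ B.rels, t' ≠ diagRel Y →
    ∀ M : Matrix Y Y ℂ, IsBasicMatrix (onePointAlg B y₀) M →
      (∃ i j : Fin 3, M (enum t i) (enum t' j) ≠ 0) →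
      ∃ k : Fin 3, ∀ i j : Fin 3,
        M (enum t i) (enum t' j) = if j = i + k then 1 else 0

/-- The set of all matrices `G_{y₀t, y₀t'}`, `t, t' ∈ T₃`. -/
noncomputable def GmatSet (X : Type*) [Fintype X] (B : AssocScheme Y)
    (enum : Finset (Y × Y) → Fin 3 → Y) : Set (Matrix (X × Y) (X × Y) ℂ) :=
  {M | ∃ t ∈ B.rels.erase (diagRel Y), ∃ t' ∈ B.rels.erase (diagRel Y), M = Gmat X enum t t'}

/-- The set of all matrices `G'_{y₀t, y₀t'}`, `t, t' ∈ T₃`. -/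
noncomputable def GmatSet' (X : Type*) [Fintype X] (B : AssocScheme Y)
    (enum : Finset (Y × Y) → Fin 3 → Y) : Set (Matrix (X × Y) (X × Y) ℂ) :=
  {M | ∃ t ∈ B.rels.erase (diagRel Y), ∃ t' ∈ B.rels.erase (diagRel Y), M = Gmat' X enum t t'}

/-- `e_{η1} = ∑_{t ∈ T₃} G_{y₀t, y₀t}`. -/
noncomputable def etaOne (X : Type*) [Fintype X] (B : AssocScheme Y)
    (enum : Finset (Y × Y) → Fin 3 → Y) : Matrix (X × Y) (X × Y) ℂ :=
  ∑ t ∈ B.rels.erase (diagRel Y), Gmat X enum t t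

/-- `e_{η2} = ∑_{t ∈ T₃} G'_{y₀t, y₀t}`. -/
noncomputable def etaTwo (X : Type*) [Fintype X] (B : AssocScheme Y)
    (enum : Finset (Y × Y) → Fin 3 → Y) : Matrix (X × Y) (X × Y) ℂ :=
  ∑ t ∈ B.rels.erase (diagRel Y), Gmat' X enum t t

end Wreath
section OmegaFacts

lemma omega3_pow_three : omega3 ^ 3 = 1 := by
  rw [omega3, ← Complex.exp_nat_mul]
  have : (3 : ℕ) * (2 * (Real.pi : ℂ) * Complex.I / 3) = 2 * Real.pi * Complex.I := by
    push_cast; ring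
  rw [this]
  simpa using Complex.exp_int_mul_two_pi_mul_I 1

lemma omega3_ne_one : omega3 ≠ 1 := by
  rw [omega3]
  intro h
  rw [Complex.exp_eq_one_iff] at h
  obtain ⟨n, hn⟩ := h
  have hpi : (Real.pi : ℂ) ≠ 0 := by simpa using Real.pi_ne_zero
  have h2 : (2:ℂ) * Real.pi * Complex.I ≠ 0 := by
    simp [hpi, Complex.I_ne_zero, two_ne_zero]
  have hn3 := congrArg (· * (3:ℂ)) hn
  have hn' : (1 : ℂ) * (2 * Real.pi * Complex.I) = (3 * n) * (2 * Real.pi * Complex.I) := by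
    field_simp at hn3
    linear_combination hn3 * (2 * Real.pi * Complex.I)
  have h1 : (1 : ℂ) = 3 * n := mul_right_cancel₀ h2 hn'
  have h1' : ((1 : ℤ) : ℂ) = ((3 * n : ℤ) : ℂ) := by push_cast; exact h1
  have : (1 : ℤ) = 3 * n := Int.cast_injective h1'
  omega

lemma omega3_sum : 1 + omega3 + omega3 ^ 2 = 0 := by
  have h : (omega3 - 1) * (1 + omega3 + omega3 ^ 2) = omega3 ^ 3 - 1 := by ring
  rw [omega3_pow_three, sub_self] at h
  rcases mul_eq_zero.mp h with h1 | h2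
  · exact absurd (sub_eq_zero.mp h1) omega3_ne_one
  · exact h2

/-- `ω^k` for `k : Fin 3`. -/
noncomputable def omg (k : Fin 3) : ℂ := omega3 ^ (k : ℕ)

lemma omg_add (a b : Fin 3) : omg (a + b) = omg a * omg b := by
  have h3 := omega3_pow_three
  rw [omg, omg, omg, Fin.val_add, ← pow_eq_pow_mod _ h3, ← pow_add]

lemma omg_sum : ∑ k : Fin 3, omg k = 0 := by
  rw [Fin.sum_univ_three]
  simpa [omg] using omega3_sum

lemma omg_zero : omg 0 = 1 := by simp [omg]

end OmegaFacts
section CycFacts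

variable {Y : Type*} [Fintype Y] [DecidableEq Y]

lemma cyc_mul_cyc (enum : Finset (Y × Y) → Fin 3 → Y) {t t' t'' : Finset (Y × Y)}
    (h2 : Function.Injective (enum t')) (k l : Fin 3) :
    cyc enum t t' k * cyc enum t' t'' l = cyc enum t t'' (k + l) := by
  rw [cyc, cyc, cyc, Finset.sum_mul]
  simp only [Finset.mul_sum]
  refine Finset.sum_congr rfl fun i _ => ?_
  rw [Finset.sum_eq_single_of_mem (i + k) (Finset.mem_univ _)]
  · rw [Matrix.single_mul_single_same, mul_one, add_assoc]
  · exact fun j _ hj => Matrix.single_mul_single_of_ne _ _ _ _ (fun h => hj (h2 h).symm) _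

lemma cyc_mul_cyc_ne (enum : Finset (Y × Y) → Fin 3 → Y) {t t' u t'' : Finset (Y × Y)}
    (h : ∀ i j, enum t' i ≠ enum u j) (k l : Fin 3) :
    cyc enum t t' k * cyc enum u t'' l = 0 := by
  rw [cyc, cyc, Finset.sum_mul]
  simp only [Finset.mul_sum]
  refine Finset.sum_eq_zero fun i _ => Finset.sum_eq_zero fun j _ => ?_
  exact Matrix.single_mul_single_of_ne _ _ _ _ (h _ _) _

lemma cyc_apply (enum : Finset (Y × Y) → Fin 3 → Y) {t t' : Finset (Y × Y)}
    (h1 : Function.Injective (enum t)) (h2 : Function.Injective (enum t'))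
    (k i j : Fin 3) :
    cyc enum t t' k (enum t i) (enum t' j) = if j = i + k then 1 else 0 := by
  rw [cyc]
  simp only [Matrix.sum_apply]
  rw [Finset.sum_eq_single_of_mem i (Finset.mem_univ _)]
  · rw [Matrix.single]
    by_cases hj : j = i + k
    · subst hj; simp
    · simp only [Matrix.of_apply]
      rw [if_neg, if_neg hj]
      rintro ⟨-, h⟩
      exact hj (h2 h.symm)
  · exact fun b _ hb => Matrix.single_apply_of_row_ne (fun h => hb (h1 h)) _ _ _

lemma cyc_row_zero (enum : Finset (Y × Y) → Fin 3 → Y) {t t' : Finset (Y × Y)}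
    {y : Y} (h : ∀ i, enum t i ≠ y) (k : Fin 3) (y' : Y) :
    cyc enum t t' k y y' = 0 := by
  simp only [cyc, Matrix.sum_apply]
  refine Finset.sum_eq_zero fun i _ => ?_
  exact Matrix.single_apply_of_row_ne (h i) _ _ _

lemma cyc_col_zero (enum : Finset (Y × Y) → Fin 3 → Y) {t t' : Finset (Y × Y)}
    {y' : Y} (h : ∀ i, enum t' i ≠ y') (k : Fin 3) (y : Y) :
    cyc enum t t' k y y' = 0 := by
  simp only [cyc, Matrix.sum_apply]
  refine Finset.sum_eq_zero fun i _ => ?_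
  exact Matrix.single_apply_of_col_ne _ _ (h (i + k)) _

/-- The `Y`-side block of `Gmat`. -/
noncomputable def Mblock (enum : Finset (Y × Y) → Fin 3 → Y) (t t' : Finset (Y × Y)) :
    Matrix Y Y ℂ :=
  cyc enum t t' 0 + omega3 • cyc enum t t' 1 + omega3 ^ 2 • cyc enum t t' 2

lemma Gmat_eq (X : Type*) [Fintype X] (enum : Finset (Y × Y) → Fin 3 → Y)
    (t t' : Finset (Y × Y)) :
    Gmat X enum t t' = ((3 * (Fintype.card X : ℂ))⁻¹) •
      (allOnes X ⊗ₖ Mblock enum t t') := rfl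

lemma Mblock_apply (enum : Finset (Y × Y) → Fin 3 → Y) {t t' : Finset (Y × Y)}
    (h1 : Function.Injective (enum t)) (h2 : Function.Injective (enum t'))
    (i j : Fin 3) :
    Mblock enum t t' (enum t i) (enum t' j) = omg (j - i) := by
  have hj : j = i + (j - i) := by rw [add_comm, sub_add_cancel]
  rw [Mblock, Matrix.add_apply, Matrix.add_apply, Matrix.smul_apply, Matrix.smul_apply,
    cyc_apply enum h1 h2, cyc_apply enum h1 h2, cyc_apply enum h1 h2]
  have hiff : ∀ k : Fin 3, (j = i + k) ↔ (j - i = k) := by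
    intro k
    constructor
    · intro h; rw [h, add_comm, add_sub_cancel_right]
    · intro h; rw [← h, add_comm, sub_add_cancel]
  simp only [hiff]
  generalize j - i = d
  fin_cases d <;> simp [omg] <;> ring

lemma Mblock_row_zero (enum : Finset (Y × Y) → Fin 3 → Y) {t t' : Finset (Y × Y)}
    {y : Y} (h : ∀ i, enum t i ≠ y) (y' : Y) :
    Mblock enum t t' y y' = 0 := by
  simp [Mblock, cyc_row_zero enum h]

lemma Mblock_col_zero (enum : Finset (Y × Y) → Fin 3 → Y) {t t' : Finset (Y × Y)}
    {y' : Y} (h : ∀ i, enum t' i ≠ y') (y : Y) :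
    Mblock enum t t' y y' = 0 := by
  simp [Mblock, cyc_col_zero enum h]

lemma Mblock_mul_same (enum : Finset (Y × Y) → Fin 3 → Y) {t t' t'' : Finset (Y × Y)}
    (h2 : Function.Injective (enum t')) :
    Mblock enum t t' * Mblock enum t' t'' = (3 : ℂ) • Mblock enum t t'' := by
  have h3 := omega3_pow_three
  rw [Mblock, Mblock, Mblock]
  rw [add_mul, add_mul, mul_add, mul_add, mul_add, mul_add, mul_add, mul_add]
  simp only [Matrix.smul_mul, Matrix.mul_smul, smul_smul]
  rw [cyc_mul_cyc enum h2, cyc_mul_cyc enum h2, cyc_mul_cyc enum h2, cyc_mul_cyc enum h2,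
    cyc_mul_cyc enum h2, cyc_mul_cyc enum h2, cyc_mul_cyc enum h2, cyc_mul_cyc enum h2,
    cyc_mul_cyc enum h2]
  have e00 : (0 + 0 : Fin 3) = 0 := by decide
  have e01 : (0 + 1 : Fin 3) = 1 := by decide
  have e02 : (0 + 2 : Fin 3) = 2 := by decide
  have e10 : (1 + 0 : Fin 3) = 1 := by decide
  have e11 : (1 + 1 : Fin 3) = 2 := by decide
  have e12 : (1 + 2 : Fin 3) = 0 := by decide
  have e20 : (2 + 0 : Fin 3) = 2 := by decide
  have e21 : (2 + 1 : Fin 3) = 0 := by decide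
  have e22 : (2 + 2 : Fin 3) = 1 := by decide
  rw [e00, e01, e02, e10, e11, e12, e20, e21, e22]
  match_scalars
  · linear_combination (2 : ℂ) * h3
  · linear_combination omega3 * h3
  · ring

lemma Mblock_mul_ne (enum : Finset (Y × Y) → Fin 3 → Y) {t t' u t'' : Finset (Y × Y)}
    (h : ∀ i j, enum t' i ≠ enum u j) :
    Mblock enum t t' * Mblock enum u t'' = 0 := by
  rw [Mblock, Mblock]
  rw [add_mul, add_mul, mul_add, mul_add, mul_add, mul_add, mul_add, mul_add]
  simp only [Matrix.smul_mul, Matrix.mul_smul, smul_smul]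
  simp [cyc_mul_cyc_ne enum h]

end CycFacts
section SchemeFacts

variable {Y : Type*} [Fintype Y] [DecidableEq Y]

lemma mem_pointFiber_iff {x y : Y} {s : Finset (Y × Y)} :
    y ∈ pointFiber x s ↔ (x, y) ∈ s := by simp [pointFiber]

lemma mem_convRel_iff {a b : Y} {s : Finset (Y × Y)} :
    (a, b) ∈ convRel s ↔ (b, a) ∈ s := by
  simp only [convRel, Finset.mem_image, Prod.exists]
  constructor
  · rintro ⟨p, q, hpq, h⟩
    cases h
    exact hpq
  · intro h
    exact ⟨b, a, h, rfl⟩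

variable {B : AssocScheme Y} {y₀ : Y} {enum : Finset (Y × Y) → Fin 3 → Y}
variable {t t' t'' u : Finset (Y × Y)}

lemma not_mem_of_ne_rel (ht : t ∈ B.rels) (hu : u ∈ B.rels) (hne : t ≠ u)
    {p : Y × Y} (hp : p ∈ t) : p ∉ u :=
  fun hq => (Finset.disjoint_left.mp (B.pairwise_disjoint t ht u hu hne)) hp hq

lemma enum_inj (he : IsEnum B y₀ enum) (ht : t ∈ B.rels) (htd : t ≠ diagRel Y) :
    Function.Injective (enum t) := (he t ht htd).1

lemma enum_mem (he : IsEnum B y₀ enum) (ht : t ∈ B.rels) (htd : t ≠ diagRel Y) (i : Fin 3) :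
    (y₀, enum t i) ∈ t := by
  have := ((he t ht htd).2 (enum t i)).mpr ⟨i, rfl⟩
  exact mem_pointFiber_iff.mp this

lemma enum_ne_y0 (he : IsEnum B y₀ enum) (ht : t ∈ B.rels) (htd : t ≠ diagRel Y) (i : Fin 3) :
    enum t i ≠ y₀ := by
  intro h
  have h1 : (y₀, enum t i) ∈ t := enum_mem he ht htd i
  have h2 : (y₀, enum t i) ∈ diagRel Y := by simp [diagRel, h]
  exact not_mem_of_ne_rel ht B.id_mem htd h1 h2

lemma enum_ne_enum (he : IsEnum B y₀ enum) (ht : t ∈ B.rels) (htd : t ≠ diagRel Y)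
    (hu : u ∈ B.rels) (hud : u ≠ diagRel Y) (hne : t ≠ u) (i j : Fin 3) :
    enum t i ≠ enum u j := by
  intro h
  have h1 := enum_mem he ht htd i
  have h2 := enum_mem he hu hud j
  rw [h] at h1
  exact not_mem_of_ne_rel ht hu hne h1 h2

lemma cover_enum (he : IsEnum B y₀ enum) (y : Y) :
    y = y₀ ∨ ∃ u, (u ∈ B.rels ∧ u ≠ diagRel Y) ∧ ∃ l, enum u l = y := by
  obtain ⟨u, hu, hyu⟩ := B.cover (y₀, y)
  by_cases hud : u = diagRel Y
  · left
    subst hud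
    have := Finset.mem_filter.mp hyu
    exact this.2.symm
  · right
    exact ⟨u, ⟨hu, hud⟩, ((he u hu hud).2 y).mp (mem_pointFiber_iff.mpr hyu)⟩

lemma adjMat_apply (s : Finset (Y × Y)) (a b : Y) :
    adjMat s a b = if (a, b) ∈ s then 1 else 0 := rfl

/-! ### one point extension algebra facts -/

lemma epsFiber_mem_onePointAlg (hu : u ∈ B.rels) :
    eps (pointFiber y₀ u) ∈ onePointAlg B y₀ := by
  rw [onePointAlg, Algebra.mem_sInf]
  rintro 𝒜 ⟨⟨hJ, hH, hHad⟩, hadj, heps⟩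
  have h1 : (adjMat u)ᴴ * (eps {y₀} * adjMat u) ∈ 𝒜 :=
    mul_mem (hH _ (hadj u hu)) (mul_mem heps (hadj u hu))
  have key : Matrix.hadamard (1 : Matrix Y Y ℂ) ((adjMat u)ᴴ * (eps {y₀} * adjMat u)) =
      eps (pointFiber y₀ u) := by
    ext a b
    rw [Matrix.hadamard_apply]
    by_cases hab : a = b
    · subst hab
      rw [Matrix.one_apply_eq, one_mul, Matrix.mul_apply]
      rw [Finset.sum_eq_single_of_mem y₀ (Finset.mem_univ _)]
      · rw [eps, eps, Matrix.diagonal_mul, Matrix.conjTranspose_apply]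
        simp only [Finset.mem_singleton, if_true, adjMat_apply]
        rw [Matrix.diagonal_apply_eq]
        by_cases h : (y₀, a) ∈ u
        · simp [h, mem_pointFiber_iff]
        · simp [h, mem_pointFiber_iff]
      · intro z _ hz
        rw [eps, Matrix.diagonal_mul]
        simp [hz]
    · rw [Matrix.one_apply_ne hab, zero_mul, eps, Matrix.diagonal_apply_ne _ hab]
  rw [← key]
  exact hHad _ (Subalgebra.one_mem 𝒜) _ h1

lemma adjMat_mem_onePointAlg (hu : u ∈ B.rels) : adjMat u ∈ onePointAlg B y₀ := by
  rw [onePointAlg, Algebra.mem_sInf]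
  rintro 𝒜 ⟨-, hadj, -⟩
  exact hadj u hu

/-! ### basic matrices -/

/-- support of a 0/1 matrix -/
noncomputable def onesOf (C : Matrix Y Y ℂ) : Finset (Y × Y) :=
  Finset.univ.filter fun p => C p.1 p.2 = 1

lemma zeroone_eq_zero {C : Matrix Y Y ℂ} (h01 : IsZeroOne C) (h : ∀ i j, C i j ≠ 1) :
    C = 0 := by
  ext i j
  rcases h01 i j with h0 | h1
  · exact h0
  · exact absurd h1 (h i j)

lemma zeroone_ne_zero {C : Matrix Y Y ℂ} (h01 : IsZeroOne C) (h : C ≠ 0) :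
    ∃ i j, C i j = 1 := by
  by_contra hc
  push_neg at hc
  exact h (zeroone_eq_zero h01 hc)

lemma exists_basic_minorant (𝒜 : Subalgebra ℂ (Matrix Y Y ℂ)) {C : Matrix Y Y ℂ}
    (hC : C ∈ 𝒜) (h01 : IsZeroOne C) (hne : C ≠ 0) :
    ∃ D, IsBasicMatrix 𝒜 D ∧ ∀ i j, D i j = 1 → C i j = 1 := by
  set S : Set ℕ := {n | ∃ D : Matrix Y Y ℂ, D ∈ 𝒜 ∧ IsZeroOne D ∧ D ≠ 0 ∧
    (∀ i j, D i j = 1 → C i j = 1) ∧ (onesOf D).card = n} with hS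
  have hSne : S.Nonempty := ⟨(onesOf C).card, C, hC, h01, hne, fun _ _ h => h, rfl⟩
  obtain ⟨D, hD𝒜, hD01, hDne, hDmin, hDcard⟩ := Nat.sInf_mem hSne
  refine ⟨D, ⟨hD𝒜, hD01, hDne, ?_⟩, hDmin⟩
  intro C' hC'𝒜 hC'01 hC'le
  by_cases hC'0 : C' = 0
  · exact Or.inl hC'0
  right
  have hmem : (onesOf C').card ∈ S :=
    ⟨C', hC'𝒜, hC'01, hC'0, fun i j h => hDmin i j (hC'le i j h), rfl⟩
  have hcardge : (onesOf D).card ≤ (onesOf C').card := hDcard ▸ Nat.sInf_le hmem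
  have hsub : onesOf C' ⊆ onesOf D := by
    intro p hp
    have := (Finset.mem_filter.mp hp).2
    exact Finset.mem_filter.mpr ⟨Finset.mem_univ _, hC'le p.1 p.2 this⟩
  have heq : onesOf C' = onesOf D := Finset.eq_of_subset_of_card_le hsub hcardge
  ext i j
  rcases hC'01 i j with h0 | h1
  · rcases hD01 i j with g0 | g1
    · rw [h0, g0]
    · exfalso
      have : (i, j) ∈ onesOf D := Finset.mem_filter.mpr ⟨Finset.mem_univ _, g1⟩
      rw [← heq] at this
      have h2 : C' i j = 1 := (Finset.mem_filter.mp this).2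
      rw [h0] at h2
      exact zero_ne_one h2
  · rw [h1, hC'le i j h1]

lemma sub_zeroone {C D : Matrix Y Y ℂ} (hC : IsZeroOne C) (hD : IsZeroOne D)
    (hle : ∀ i j, D i j = 1 → C i j = 1) : IsZeroOne (C - D) := by
  intro i j
  rw [Matrix.sub_apply]
  rcases hD i j with h0 | h1
  · rw [h0, sub_zero]; exact hC i j
  · rw [h1, hle i j h1, sub_self]; exact Or.inl rfl

lemma sub_ones_lt {C D : Matrix Y Y ℂ} (hC : IsZeroOne C) (hD : IsZeroOne D)
    (hle : ∀ i j, D i j = 1 → C i j = 1) (hDne : D ≠ 0) :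
    (onesOf (C - D)).card < (onesOf C).card := by
  obtain ⟨i, j, hij⟩ := zeroone_ne_zero hD hDne
  apply Finset.card_lt_card
  constructor
  · intro p hp
    have hp1 : (C - D) p.1 p.2 = 1 := (Finset.mem_filter.mp hp).2
    rw [Matrix.sub_apply] at hp1
    rcases hD p.1 p.2 with h0 | h1
    · rw [h0, sub_zero] at hp1
      exact Finset.mem_filter.mpr ⟨Finset.mem_univ _, hp1⟩
    · exfalso
      rw [h1, hle p.1 p.2 h1] at hp1
      simp at hp1
  · intro hsub
    have hCij : (i, j) ∈ onesOf C :=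
      Finset.mem_filter.mpr ⟨Finset.mem_univ _, hle i j hij⟩
    have := hsub hCij
    have h2 : (C - D) i j = 1 := (Finset.mem_filter.mp this).2
    rw [Matrix.sub_apply, hle i j hij, hij] at h2
    simp at h2

end SchemeFacts
section KeyLemma

variable {Y : Type*} [Fintype Y] [DecidableEq Y]
variable {B : AssocScheme Y} {y₀ : Y} {enum : Finset (Y × Y) → Fin 3 → Y}
variable {t t'' u : Finset (Y × Y)}

lemma shift_invariant_aux (hwo : IsWellOrdering B y₀ enum)
    (hu : u ∈ B.rels) (hud : u ≠ diagRel Y) (ht : t ∈ B.rels) (htd : t ≠ diagRel Y) :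
    ∀ n : ℕ, ∀ C : Matrix Y Y ℂ, C ∈ onePointAlg B y₀ → IsZeroOne C →
      (∀ y y', C y y' = 1 → (∃ i, enum u i = y) ∧ (∃ j, enum t j = y')) →
      (onesOf C).card ≤ n →
      ∀ i j : Fin 3, C (enum u i) (enum t j) = C (enum u (i + 1)) (enum t (j + 1)) := by
  intro n
  induction n with
  | zero =>
    intro C _ h01 _ hcard i j
    have hemp : onesOf C = ∅ := Finset.card_eq_zero.mp (Nat.le_zero.mp hcard)
    have hz : ∀ a b, C a b = 0 := by
      intro a b
      rcases h01 a b with h | h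
      · exact h
      · exfalso
        have : (a, b) ∈ onesOf C := Finset.mem_filter.mpr ⟨Finset.mem_univ _, h⟩
        rw [hemp] at this
        exact absurd this (Finset.notMem_empty _)
    rw [hz, hz]
  | succ n ih =>
    intro C hC h01 hsupp hcard i j
    by_cases hC0 : C = 0
    · rw [hC0]; simp
    obtain ⟨D, hDbasic, hDle⟩ := exists_basic_minorant _ hC h01 hC0
    obtain ⟨hD𝒜, hD01, hDne, -⟩ := id hDbasic
    obtain ⟨a, b, hab⟩ := zeroone_ne_zero hD01 hDne
    obtain ⟨⟨i₀, hi₀⟩, j₀, hj₀⟩ := hsupp a b (hDle a b hab)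
    have hnz : ∃ i j : Fin 3, D (enum u i) (enum t j) ≠ 0 :=
      ⟨i₀, j₀, by rw [hi₀, hj₀, hab]; exact one_ne_zero⟩
    obtain ⟨k, hk⟩ := hwo.2 u hu hud t ht htd D hDbasic hnz
    have hsub01 := sub_zeroone h01 hD01 hDle
    have hsubsupp : ∀ y y', (C - D) y y' = 1 →
        (∃ i, enum u i = y) ∧ (∃ j, enum t j = y') := by
      intro y y' h
      apply hsupp y y'
      rw [Matrix.sub_apply] at h
      rcases hD01 y y' with h0 | h1
      · rwa [h0, sub_zero] at h
      · exfalso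
        rw [h1, hDle y y' h1] at h
        simp at h
    have hcard' : (onesOf (C - D)).card ≤ n := by
      have := sub_ones_lt h01 hD01 hDle hDne
      omega
    have hCD := ih (C - D) (Subalgebra.sub_mem _ hC hD𝒜) hsub01 hsubsupp hcard' i j
    have e : ∀ a b : Fin 3, C (enum u a) (enum t b) =
        (C - D) (enum u a) (enum t b) + D (enum u a) (enum t b) := by
      intro a b; simp
    have hiff : (j + 1 = i + 1 + k) ↔ (j = i + k) := by
      rw [add_right_comm i 1 k]
      exact add_left_inj 1
    rw [e, e, hCD, hk, hk, if_congr hiff rfl rfl]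

open Fin.NatCast in
lemma adj_shift (hwo : IsWellOrdering B y₀ enum) (ht'' : t'' ∈ B.rels)
    (hu : u ∈ B.rels) (hud : u ≠ diagRel Y) (ht : t ∈ B.rels) (htd : t ≠ diagRel Y)
    (i j : Fin 3) :
    adjMat t'' (enum u i) (enum t j) = adjMat t'' (enum u 0) (enum t (j - i)) := by
  set C := eps (pointFiber y₀ u) * adjMat t'' * eps (pointFiber y₀ t) with hCdef
  have hC𝒜 : C ∈ onePointAlg B y₀ :=
    mul_mem (mul_mem (epsFiber_mem_onePointAlg hu) (adjMat_mem_onePointAlg ht''))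
      (epsFiber_mem_onePointAlg ht)
  have hCapp : ∀ y y', C y y' = ((if y ∈ pointFiber y₀ u then 1 else 0) *
      adjMat t'' y y') * (if y' ∈ pointFiber y₀ t then 1 else 0) := by
    intro y y'
    rw [hCdef, eps, eps, Matrix.mul_diagonal, Matrix.diagonal_mul]
  have h01 : IsZeroOne C := by
    intro y y'
    rw [hCapp, adjMat_apply]
    split_ifs <;> norm_num
  have hsupp : ∀ y y', C y y' = 1 → (∃ i, enum u i = y) ∧ ∃ j, enum t j = y' := by
    intro y y' h
    rw [hCapp] at h
    by_cases h1 : y ∈ pointFiber y₀ u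
    · by_cases h2 : y' ∈ pointFiber y₀ t
      · exact ⟨((hwo.1 u hu hud).2 y).mp h1, ((hwo.1 t ht htd).2 y').mp h2⟩
      · rw [if_neg h2, mul_zero] at h
        exact absurd h.symm one_ne_zero
    · rw [if_neg h1, zero_mul, zero_mul] at h
      exact absurd h.symm one_ne_zero
  have hshift := shift_invariant_aux hwo hu hud ht htd (onesOf C).card C hC𝒜 h01 hsupp le_rfl
  have hgrid : ∀ a b : Fin 3, C (enum u a) (enum t b) = adjMat t'' (enum u a) (enum t b) := by
    intro a b
    rw [hCapp, if_pos (mem_pointFiber_iff.mpr (enum_mem hwo.1 hu hud a)),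
      if_pos (mem_pointFiber_iff.mpr (enum_mem hwo.1 ht htd b)), one_mul, mul_one]
  have hn : ∀ n : ℕ, ∀ a b : Fin 3,
      C (enum u a) (enum t b) = C (enum u (a + (n : Fin 3))) (enum t (b + (n : Fin 3))) := by
    intro n
    induction n with
    | zero => intro a b; simp
    | succ m ihm =>
      intro a b
      have h1 := ihm a b
      have h2 := hshift (a + (m : Fin 3)) (b + (m : Fin 3))
      rw [h1, h2]
      have hc : ((m + 1 : ℕ) : Fin 3) = (m : Fin 3) + 1 := by push_cast; ring
      rw [hc, ← add_assoc, ← add_assoc]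
  have hkey := hn i.val 0 (j - i)
  rw [zero_add, Fin.cast_val_eq_self, sub_add_cancel] at hkey
  rw [← hgrid, ← hgrid, ← hkey]

end KeyLemma
section BigMul

variable {Y : Type*} [Fintype Y] [DecidableEq Y]
variable {B : AssocScheme Y} {y₀ : Y} {enum : Finset (Y × Y) → Fin 3 → Y}
variable {t t' t'' u : Finset (Y × Y)}

lemma omg_sum_subLeft (m : Fin 3) : ∑ d : Fin 3, omg (m - d) = 0 := by
  rw [Fintype.sum_equiv (Equiv.subLeft m) (fun d => omg (m - d)) omg (fun d => rfl)]
  exact omg_sum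

lemma omg_sum_subRight (l : Fin 3) : ∑ d : Fin 3, omg (d - l) = 0 := by
  rw [Fintype.sum_equiv (Equiv.subRight l) (fun d => omg (d - l)) omg (fun d => rfl)]
  exact omg_sum

lemma mul_Mblock_apply (h1 : Function.Injective (enum t)) (A : Matrix Y Y ℂ) (y y' : Y) :
    (A * Mblock enum t t') y y' =
      ∑ d : Fin 3, A y (enum t d) * Mblock enum t t' (enum t d) y' := by
  rw [Matrix.mul_apply, ← Finset.sum_image (f := fun z => A y z * Mblock enum t t' z y')
    (g := enum t) (s := Finset.univ) (fun a _ b _ h => h1 h)]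
  refine (Finset.sum_subset (Finset.subset_univ _) ?_).symm
  intro z _ hz
  have hne : ∀ i, enum t i ≠ z := fun i hi => hz (Finset.mem_image.mpr ⟨i, Finset.mem_univ _, hi⟩)
  rw [Mblock_row_zero enum hne, mul_zero]

lemma Mblock_mul_apply (h2 : Function.Injective (enum t')) (A : Matrix Y Y ℂ) (y y' : Y) :
    (Mblock enum t t' * A) y y' =
      ∑ d : Fin 3, Mblock enum t t' y (enum t' d) * A (enum t' d) y' := by
  rw [Matrix.mul_apply, ← Finset.sum_image (f := fun z => Mblock enum t t' y z * A z y')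
    (g := enum t') (s := Finset.univ) (fun a _ b _ h => h2 h)]
  refine (Finset.sum_subset (Finset.subset_univ _) ?_).symm
  intro z _ hz
  have hne : ∀ i, enum t' i ≠ z := fun i hi => hz (Finset.mem_image.mpr ⟨i, Finset.mem_univ _, hi⟩)
  rw [Mblock_col_zero enum hne, zero_mul]

lemma adjMat_mul_Mblock (hwo : IsWellOrdering B y₀ enum)
    (ht'' : t'' ∈ B.rels) (ht : t ∈ B.rels) (htd : t ≠ diagRel Y)
    (ht' : t' ∈ B.rels) (ht'd : t' ≠ diagRel Y) :
    adjMat t'' * Mblock enum t t' =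
      ∑ u ∈ B.rels.erase (diagRel Y),
        (∑ e : Fin 3, omg (0 - e) * adjMat t'' (enum u 0) (enum t e)) • Mblock enum u t' := by
  have he := hwo.1
  have hinjt := enum_inj he ht htd
  have hinjt' := enum_inj he ht' ht'd
  ext y y'
  rw [mul_Mblock_apply hinjt, Matrix.sum_apply]
  simp only [Matrix.smul_apply, smul_eq_mul]
  rcases cover_enum he y with hy | ⟨u₀, ⟨hu₀, hu₀d⟩, l, hl⟩
  · rw [hy]
    have hRHS : (∑ u ∈ B.rels.erase (diagRel Y),
        (∑ e : Fin 3, omg (0 - e) * adjMat t'' (enum u 0) (enum t e)) *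
          Mblock enum u t' y₀ y') = 0 := by
      refine Finset.sum_eq_zero fun u hu => ?_
      rw [Mblock_row_zero enum
        (fun i => enum_ne_y0 he (Finset.mem_of_mem_erase hu) (Finset.ne_of_mem_erase hu) i),
        mul_zero]
    rw [hRHS]
    by_cases htt : t'' = t
    · subst htt
      have h1 : ∀ d : Fin 3, adjMat t'' y₀ (enum t'' d) = 1 := fun d => by
        rw [adjMat_apply, if_pos (enum_mem he ht htd d)]
      have step : ∑ d : Fin 3, adjMat t'' y₀ (enum t'' d) * Mblock enum t'' t' (enum t'' d) y'
          = ∑ d : Fin 3, Mblock enum t'' t' (enum t'' d) y' :=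
        Finset.sum_congr rfl fun d _ => by rw [h1 d, one_mul]
      rw [step]
      by_cases hy' : ∃ m, enum t' m = y'
      · obtain ⟨m, rfl⟩ := hy'
        have step2 : ∑ d : Fin 3, Mblock enum t'' t' (enum t'' d) (enum t' m)
            = ∑ d : Fin 3, omg (m - d) :=
          Finset.sum_congr rfl fun d _ => Mblock_apply enum hinjt hinjt' d m
        rw [step2]
        exact omg_sum_subLeft m
      · exact Finset.sum_eq_zero fun d _ =>
          Mblock_col_zero enum (fun i hi => hy' ⟨i, hi⟩) _
    · refine Finset.sum_eq_zero fun d _ => ?_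
      have h0 : adjMat t'' y₀ (enum t d) = 0 := by
        rw [adjMat_apply, if_neg]
        exact not_mem_of_ne_rel ht ht'' (fun h => htt h.symm) (enum_mem he ht htd d)
      rw [h0, zero_mul]
  · subst hl
    rw [Finset.sum_eq_single_of_mem u₀ (Finset.mem_erase.mpr ⟨hu₀d, hu₀⟩)
      (fun u hu hne => by
        rw [Mblock_row_zero enum (fun i => enum_ne_enum he (Finset.mem_of_mem_erase hu)
          (Finset.ne_of_mem_erase hu) hu₀ hu₀d hne i l), mul_zero])]
    by_cases hy' : ∃ m, enum t' m = y'
    · obtain ⟨m, rfl⟩ := hy'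
      rw [Mblock_apply enum (enum_inj he hu₀ hu₀d) hinjt']
      have hterm : ∀ d : Fin 3,
          adjMat t'' (enum u₀ l) (enum t d) * Mblock enum t t' (enum t d) (enum t' m) =
          omg (m - l) * (omg (0 - (d - l)) * adjMat t'' (enum u₀ 0) (enum t (d - l))) := by
        intro d
        rw [Mblock_apply enum hinjt hinjt', adj_shift hwo ht'' hu₀ hu₀d ht htd]
        have hsplit : m - d = (m - l) + (0 - (d - l)) := by abel
        rw [hsplit, omg_add]
        ring
      rw [Finset.sum_congr rfl (fun d _ => hterm d), ← Finset.mul_sum]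
      rw [Fintype.sum_equiv (Equiv.subRight l)
        (fun d => omg (0 - (d - l)) * adjMat t'' (enum u₀ 0) (enum t (d - l)))
        (fun e => omg (0 - e) * adjMat t'' (enum u₀ 0) (enum t e)) (fun d => rfl)]
      ring
    · have hcol : ∀ i, enum t' i ≠ y' := fun i hi => hy' ⟨i, hi⟩
      rw [Mblock_col_zero enum hcol, mul_zero]
      exact Finset.sum_eq_zero fun d _ => by rw [Mblock_col_zero enum hcol, mul_zero]

lemma Mblock_mul_adjMat (hwo : IsWellOrdering B y₀ enum)
    (ht'' : t'' ∈ B.rels) (ht : t ∈ B.rels) (htd : t ≠ diagRel Y)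
    (ht' : t' ∈ B.rels) (ht'd : t' ≠ diagRel Y) :
    Mblock enum t t' * adjMat t'' =
      ∑ u ∈ B.rels.erase (diagRel Y),
        (∑ e : Fin 3, omg (0 - e) * adjMat t'' (enum t' 0) (enum u e)) • Mblock enum t u := by
  have he := hwo.1
  have hinjt := enum_inj he ht htd
  have hinjt' := enum_inj he ht' ht'd
  ext y y'
  rw [Mblock_mul_apply hinjt', Matrix.sum_apply]
  simp only [Matrix.smul_apply, smul_eq_mul]
  by_cases hy : ∃ l, enum t l = y
  swap
  · have hrow : ∀ i, enum t i ≠ y := fun i hi => hy ⟨i, hi⟩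
    rw [Finset.sum_eq_zero (fun d _ => by rw [Mblock_row_zero enum hrow, zero_mul])]
    exact (Finset.sum_eq_zero fun u _ => by rw [Mblock_row_zero enum hrow, mul_zero]).symm
  obtain ⟨l, rfl⟩ := hy
  rcases cover_enum he y' with hy' | ⟨u₀, ⟨hu₀, hu₀d⟩, m, hm⟩
  · rw [hy']
    have hRHS : (∑ u ∈ B.rels.erase (diagRel Y),
        (∑ e : Fin 3, omg (0 - e) * adjMat t'' (enum t' 0) (enum u e)) *
          Mblock enum t u (enum t l) y₀) = 0 := by
      refine Finset.sum_eq_zero fun u hu => ?_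
      rw [Mblock_col_zero enum
        (fun i => enum_ne_y0 he (Finset.mem_of_mem_erase hu) (Finset.ne_of_mem_erase hu) i),
        mul_zero]
    rw [hRHS]
    by_cases hconv : convRel t'' = t'
    · have h1 : ∀ d : Fin 3, adjMat t'' (enum t' d) y₀ = 1 := by
        intro d
        rw [adjMat_apply, if_pos]
        rw [← mem_convRel_iff, hconv]
        exact enum_mem he ht' ht'd d
      have step : ∑ d : Fin 3, Mblock enum t t' (enum t l) (enum t' d) * adjMat t'' (enum t' d) y₀
          = ∑ d : Fin 3, omg (d - l) := by
        refine Finset.sum_congr rfl fun d _ => ?_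
        rw [h1 d, mul_one, Mblock_apply enum hinjt hinjt']
      rw [step]
      exact omg_sum_subRight l
    · refine Finset.sum_eq_zero fun d _ => ?_
      have h0 : adjMat t'' (enum t' d) y₀ = 0 := by
        rw [adjMat_apply, if_neg]
        intro hmem
        have h2 : (y₀, enum t' d) ∈ convRel t'' := mem_convRel_iff.mpr hmem
        exact not_mem_of_ne_rel ht' (B.conv_mem t'' ht'') (fun h => hconv h.symm)
          (enum_mem he ht' ht'd d) h2
      rw [h0, mul_zero]
  · subst hm
    rw [Finset.sum_eq_single_of_mem u₀ (Finset.mem_erase.mpr ⟨hu₀d, hu₀⟩)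
      (fun u hu hne => by
        rw [Mblock_col_zero enum (fun i => enum_ne_enum he (Finset.mem_of_mem_erase hu)
          (Finset.ne_of_mem_erase hu) hu₀ hu₀d hne i m), mul_zero])]
    rw [Mblock_apply enum hinjt (enum_inj he hu₀ hu₀d)]
    have hterm : ∀ d : Fin 3,
        Mblock enum t t' (enum t l) (enum t' d) * adjMat t'' (enum t' d) (enum u₀ m) =
        omg (m - l) * (omg (0 - (m - d)) * adjMat t'' (enum t' 0) (enum u₀ (m - d))) := by
      intro d
      rw [Mblock_apply enum hinjt hinjt', adj_shift hwo ht'' ht' ht'd hu₀ hu₀d]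
      have hsplit : d - l = (m - l) + (0 - (m - d)) := by abel
      rw [hsplit, omg_add]
      ring
    rw [Finset.sum_congr rfl (fun d _ => hterm d), ← Finset.mul_sum]
    rw [Fintype.sum_equiv (Equiv.subLeft m)
      (fun d => omg (0 - (m - d)) * adjMat t'' (enum t' 0) (enum u₀ (m - d)))
      (fun e => omg (0 - e) * adjMat t'' (enum t' 0) (enum u₀ e)) (fun d => rfl)]
    ring

end BigMul
section WreathAux

variable {X Y : Type*} [Fintype X] [DecidableEq X] [Fintype Y] [DecidableEq Y]

lemma assoc_nonempty (A : AssocScheme X) : Nonempty X := by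
  obtain ⟨p, hp⟩ := A.nonempty_mem _ A.id_mem
  exact ⟨p.1⟩

lemma mem_diagRel (x : X) : (x, x) ∈ diagRel X :=
  Finset.mem_filter.mpr ⟨Finset.mem_univ _, rfl⟩

lemma allOnes_mul_allOnes :
    allOnes X * allOnes X = (Fintype.card X : ℂ) • allOnes X := by
  ext x y
  rw [Matrix.mul_apply]
  simp [allOnes, Finset.card_univ]

lemma fiber_card_const (A : AssocScheme X) {s : Finset (X × X)} (hs : s ∈ A.rels)
    (x x' : X) : (pointFiber x s).card = (pointFiber x' s).card := by
  have h := A.pconst s hs (convRel s) (A.conv_mem s hs) (diagRel X) A.id_mem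
      (x, x) (mem_diagRel x) (x', x') (mem_diagRel x')
  have e1 : ∀ z : X, (Finset.univ.filter fun w => (z, w) ∈ s ∧ (w, z) ∈ convRel s) =
      pointFiber z s := by
    intro z
    rw [pointFiber]
    exact Finset.filter_congr fun w _ =>
      ⟨fun hh => hh.1, fun hh => ⟨hh, mem_convRel_iff.mpr hh⟩⟩
  have h' : (Finset.univ.filter fun w => (x, w) ∈ s ∧ (w, x) ∈ convRel s).card =
      (Finset.univ.filter fun w => (x', w) ∈ s ∧ (w, x') ∈ convRel s).card := h
  rwa [e1 x, e1 x'] at h'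

lemma adjMat_mul_allOnes (A : AssocScheme X) {s : Finset (X × X)} (hs : s ∈ A.rels) :
    ∃ c : ℂ, adjMat s * allOnes X = c • allOnes X := by
  have : Nonempty X := assoc_nonempty A
  obtain ⟨x₁⟩ := this
  refine ⟨((pointFiber x₁ s).card : ℂ), ?_⟩
  ext x y
  rw [Matrix.mul_apply]
  have : ∀ z : X, adjMat s x z * allOnes X z y = if z ∈ pointFiber x s then 1 else 0 := by
    intro z
    rw [adjMat_apply, allOnes]
    by_cases h : (x, z) ∈ s
    · rw [if_pos h, if_pos (mem_pointFiber_iff.mpr h)]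
      simp
    · rw [if_neg h, if_neg (fun hh => h (mem_pointFiber_iff.mp hh))]
      simp
  rw [Finset.sum_congr rfl fun z _ => this z, Finset.sum_ite_mem, Finset.univ_inter,
    Finset.sum_const, nsmul_eq_mul, mul_one, fiber_card_const A hs x x₁]
  simp [allOnes]

lemma allOnes_mul_adjMat (A : AssocScheme X) {s : Finset (X × X)} (hs : s ∈ A.rels) :
    ∃ c : ℂ, allOnes X * adjMat s = c • allOnes X := by
  have : Nonempty X := assoc_nonempty A
  obtain ⟨x₁⟩ := this
  refine ⟨((pointFiber x₁ (convRel s)).card : ℂ), ?_⟩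
  ext x y
  rw [Matrix.mul_apply]
  have : ∀ z : X, allOnes X x z * adjMat s z y = if z ∈ pointFiber y (convRel s) then 1 else 0 := by
    intro z
    rw [adjMat_apply, allOnes]
    by_cases h : (z, y) ∈ s
    · rw [if_pos h, if_pos (mem_pointFiber_iff.mpr (mem_convRel_iff.mpr h))]
      simp
    · rw [if_neg h, if_neg (fun hh => h (mem_convRel_iff.mp (mem_pointFiber_iff.mp hh)))]
      simp
  rw [Finset.sum_congr rfl fun z _ => this z, Finset.sum_ite_mem, Finset.univ_inter,
    Finset.sum_const, nsmul_eq_mul, mul_one,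
    fiber_card_const A (A.conv_mem s hs) y x₁]
  simp [allOnes]

lemma kron_sum_right {ι : Type*} (A : Matrix X X ℂ) (s : Finset ι) (f : ι → Matrix Y Y ℂ) :
    A ⊗ₖ (∑ i ∈ s, f i) = ∑ i ∈ s, A ⊗ₖ f i := by
  ext ⟨a, c⟩ ⟨b, d⟩
  simp [Matrix.kroneckerMap_apply, Matrix.sum_apply, Finset.mul_sum]

variable {B : AssocScheme Y} {y₀ : Y} {enum : Finset (Y × Y) → Fin 3 → Y}
variable {t t' t'' : Finset (Y × Y)}

lemma eps_single_mul_Mblock (he : IsEnum B y₀ enum) (ht : t ∈ B.rels) (htd : t ≠ diagRel Y) :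
    eps ({y₀} : Finset Y) * Mblock enum t t' = 0 := by
  ext y y'
  rw [eps, Matrix.diagonal_mul, Matrix.zero_apply]
  by_cases hy : y = y₀
  · subst hy
    rw [Mblock_row_zero enum (fun i => enum_ne_y0 he ht htd i), mul_zero]
  · rw [if_neg (by simpa using hy), zero_mul]

lemma Mblock_mul_eps_single (he : IsEnum B y₀ enum) (ht' : t' ∈ B.rels) (ht'd : t' ≠ diagRel Y) :
    Mblock enum t t' * eps ({y₀} : Finset Y) = 0 := by
  ext y y'
  rw [eps, Matrix.mul_diagonal, Matrix.zero_apply]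
  by_cases hy : y' = y₀
  · subst hy
    rw [Mblock_col_zero enum (fun i => enum_ne_y0 he ht' ht'd i), zero_mul]
  · rw [if_neg (by simpa using hy), mul_zero]

lemma eps_fiber_mul_Mblock (he : IsEnum B y₀ enum)
    (ht'' : t'' ∈ B.rels) (ht''d : t'' ≠ diagRel Y)
    (ht : t ∈ B.rels) (htd : t ≠ diagRel Y) :
    eps (pointFiber y₀ t'') * Mblock enum t t' =
      if t'' = t then Mblock enum t t' else 0 := by
  ext y y'
  rw [eps, Matrix.diagonal_mul]
  by_cases hy : ∃ i, enum t i = y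
  · obtain ⟨i, rfl⟩ := hy
    by_cases htt : t'' = t
    · subst htt
      rw [if_pos (mem_pointFiber_iff.mpr (enum_mem he ht'' ht''d i)), one_mul, if_pos rfl]
    · rw [if_neg, zero_mul, if_neg htt, Matrix.zero_apply]
      intro hmem
      exact not_mem_of_ne_rel ht ht'' (fun h => htt h.symm) (enum_mem he ht htd i)
        (mem_pointFiber_iff.mp hmem)
  · have hrow : ∀ i, enum t i ≠ y := fun i hi => hy ⟨i, hi⟩
    rw [Mblock_row_zero enum hrow, mul_zero]
    split_ifs with h
    · subst h
      rw [Mblock_row_zero enum hrow]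
    · rw [Matrix.zero_apply]

lemma Mblock_mul_eps_fiber (he : IsEnum B y₀ enum)
    (ht'' : t'' ∈ B.rels) (ht''d : t'' ≠ diagRel Y)
    (ht' : t' ∈ B.rels) (ht'd : t' ≠ diagRel Y) :
    Mblock enum t t' * eps (pointFiber y₀ t'') =
      if t'' = t' then Mblock enum t t' else 0 := by
  ext y y'
  rw [eps, Matrix.mul_diagonal]
  by_cases hy : ∃ i, enum t' i = y'
  · obtain ⟨i, rfl⟩ := hy
    by_cases htt : t'' = t'
    · subst htt
      rw [if_pos (mem_pointFiber_iff.mpr (enum_mem he ht'' ht''d i)), mul_one, if_pos rfl]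
    · rw [if_neg, mul_zero, if_neg htt, Matrix.zero_apply]
      intro hmem
      exact not_mem_of_ne_rel ht' ht'' (fun h => htt h.symm) (enum_mem he ht' ht'd i)
        (mem_pointFiber_iff.mp hmem)
  · have hcol : ∀ i, enum t' i ≠ y' := fun i hi => hy ⟨i, hi⟩
    rw [Mblock_col_zero enum hcol, zero_mul]
    split_ifs with h
    · subst h
      rw [Mblock_col_zero enum hcol]
    · rw [Matrix.zero_apply]

end WreathAux
section GmatFacts

variable {X Y : Type*} [Fintype X] [DecidableEq X] [Fintype Y] [DecidableEq Y]
variable {B : AssocScheme Y} {y₀ : Y} {enum : Finset (Y × Y) → Fin 3 → Y}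
variable {t t' t'' t''' : Finset (Y × Y)}

lemma card_ne_zero_of_nonempty (hX : Nonempty X) : (Fintype.card X : ℂ) ≠ 0 := by
  have : 0 < Fintype.card X := Fintype.card_pos_iff.mpr hX
  exact_mod_cast this.ne'

lemma Gmat_mul_Gmat (hX : Nonempty X) (he : IsEnum B y₀ enum)
    (ht' : t' ∈ B.rels) (ht'd : t' ≠ diagRel Y)
    (ht''' : t''' ∈ B.rels) (ht'''d : t''' ≠ diagRel Y) :
    Gmat X enum t t' * Gmat X enum t''' t'' =
      if t' = t''' then Gmat X enum t t'' else 0 := by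
  have hN := card_ne_zero_of_nonempty hX
  rw [Gmat_eq, Gmat_eq, Matrix.smul_mul, Matrix.mul_smul, smul_smul,
    ← Matrix.mul_kronecker_mul, allOnes_mul_allOnes]
  by_cases h : t' = t'''
  · subst h
    rw [Mblock_mul_same enum (enum_inj he ht' ht'd), if_pos rfl, Gmat_eq,
      Matrix.smul_kronecker, Matrix.kronecker_smul, smul_smul, smul_smul]
    congr 1
    field_simp
  · rw [Mblock_mul_ne enum
      (fun i j => enum_ne_enum he ht' ht'd ht''' ht'''d h i j), if_neg h,
      Matrix.kronecker_zero, smul_zero]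

/-- action of generator 1 (left) -/
lemma tilde_mul_Gmat {s : Finset (X × X)} {c : ℂ}
    (hc : adjMat s * allOnes X = c • allOnes X) :
    (adjMat s ⊗ₖ (1 : Matrix Y Y ℂ)) * Gmat X enum t t' = c • Gmat X enum t t' := by
  rw [Gmat_eq, Matrix.mul_smul, ← Matrix.mul_kronecker_mul, one_mul, hc,
    Matrix.smul_kronecker, smul_smul, smul_smul, mul_comm]

lemma Gmat_mul_tilde {s : Finset (X × X)} {c : ℂ}
    (hc : allOnes X * adjMat s = c • allOnes X) :
    Gmat X enum t t' * (adjMat s ⊗ₖ (1 : Matrix Y Y ℂ)) = c • Gmat X enum t t' := by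
  rw [Gmat_eq, Matrix.smul_mul, ← Matrix.mul_kronecker_mul, mul_one, hc,
    Matrix.smul_kronecker, smul_smul, smul_smul, mul_comm]

/-- action of generator 2 -/
lemma epsx_mul_Gmat (he : IsEnum B y₀ enum) (ht : t ∈ B.rels) (htd : t ≠ diagRel Y)
    {U : Finset X} :
    (eps U ⊗ₖ eps ({y₀} : Finset Y)) * Gmat X enum t t' = 0 := by
  rw [Gmat_eq, Matrix.mul_smul, ← Matrix.mul_kronecker_mul,
    eps_single_mul_Mblock he ht htd, Matrix.kronecker_zero, smul_zero]

lemma Gmat_mul_epsx (he : IsEnum B y₀ enum) (ht' : t' ∈ B.rels) (ht'd : t' ≠ diagRel Y)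
    {U : Finset X} :
    Gmat X enum t t' * (eps U ⊗ₖ eps ({y₀} : Finset Y)) = 0 := by
  rw [Gmat_eq, Matrix.smul_mul, ← Matrix.mul_kronecker_mul,
    Mblock_mul_eps_single he ht' ht'd, Matrix.kronecker_zero, smul_zero]

/-- action of generator 4 (diagonal part) -/
lemma epsy_mul_Gmat (he : IsEnum B y₀ enum)
    (ht'' : t'' ∈ B.rels) (ht''d : t'' ≠ diagRel Y)
    (ht : t ∈ B.rels) (htd : t ≠ diagRel Y) :
    ((1 : Matrix X X ℂ) ⊗ₖ eps (pointFiber y₀ t'')) * Gmat X enum t t' =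
      if t'' = t then Gmat X enum t t' else 0 := by
  rw [Gmat_eq, Matrix.mul_smul, ← Matrix.mul_kronecker_mul, one_mul,
    eps_fiber_mul_Mblock he ht'' ht''d ht htd]
  by_cases h : t'' = t
  · rw [if_pos h, if_pos h]
  · rw [if_neg h, if_neg h, Matrix.kronecker_zero, smul_zero]

lemma Gmat_mul_epsy (he : IsEnum B y₀ enum)
    (ht'' : t'' ∈ B.rels) (ht''d : t'' ≠ diagRel Y)
    (ht' : t' ∈ B.rels) (ht'd : t' ≠ diagRel Y) :
    Gmat X enum t t' * ((1 : Matrix X X ℂ) ⊗ₖ eps (pointFiber y₀ t'')) =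
      if t'' = t' then Gmat X enum t t' else 0 := by
  rw [Gmat_eq, Matrix.smul_mul, ← Matrix.mul_kronecker_mul, mul_one,
    Mblock_mul_eps_fiber he ht'' ht''d ht' ht'd]
  by_cases h : t'' = t'
  · rw [if_pos h, if_pos h]
  · rw [if_neg h, if_neg h, Matrix.kronecker_zero, smul_zero]

/-- action of generator 3 (left) -/
lemma bar_mul_Gmat (hwo : IsWellOrdering B y₀ enum)
    (ht'' : t'' ∈ B.rels) (ht : t ∈ B.rels) (htd : t ≠ diagRel Y)
    (ht' : t' ∈ B.rels) (ht'd : t' ≠ diagRel Y) :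
    (allOnes X ⊗ₖ adjMat t'') * Gmat X enum t t' =
      ∑ u ∈ B.rels.erase (diagRel Y),
        ((Fintype.card X : ℂ) * ∑ e : Fin 3, omg (0 - e) * adjMat t'' (enum u 0) (enum t e)) •
          Gmat X enum u t' := by
  rw [Gmat_eq, Matrix.mul_smul, ← Matrix.mul_kronecker_mul, allOnes_mul_allOnes,
    adjMat_mul_Mblock hwo ht'' ht htd ht' ht'd, Matrix.smul_kronecker,
    kron_sum_right]
  rw [Finset.smul_sum, Finset.smul_sum]
  refine Finset.sum_congr rfl fun u hu => ?_
  simp only [Matrix.kronecker_smul, Gmat_eq, smul_smul]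
  congr 1
  ring

lemma Gmat_mul_bar (hwo : IsWellOrdering B y₀ enum)
    (ht'' : t'' ∈ B.rels) (ht : t ∈ B.rels) (htd : t ≠ diagRel Y)
    (ht' : t' ∈ B.rels) (ht'd : t' ≠ diagRel Y) :
    Gmat X enum t t' * (allOnes X ⊗ₖ adjMat t'') =
      ∑ u ∈ B.rels.erase (diagRel Y),
        ((Fintype.card X : ℂ) * ∑ e : Fin 3, omg (0 - e) * adjMat t'' (enum t' 0) (enum u e)) •
          Gmat X enum t u := by
  rw [Gmat_eq, Matrix.smul_mul, ← Matrix.mul_kronecker_mul, allOnes_mul_allOnes,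
    Mblock_mul_adjMat hwo ht'' ht htd ht' ht'd, Matrix.smul_kronecker,
    kron_sum_right]
  rw [Finset.smul_sum, Finset.smul_sum]
  refine Finset.sum_congr rfl fun u hu => ?_
  simp only [Matrix.kronecker_smul, Gmat_eq, smul_smul]
  congr 1
  ring

end GmatFacts
section TraceFacts

variable {X Y : Type*} [Fintype X] [DecidableEq X] [Fintype Y] [DecidableEq Y]
variable {B : AssocScheme Y} {y₀ : Y} {enum : Finset (Y × Y) → Fin 3 → Y}
variable {a b : Finset (Y × Y)}

lemma trace_std (x y : Y) (c : ℂ) :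
    Matrix.trace (Matrix.single x y c) = if x = y then c else 0 := by
  rw [Matrix.trace]
  by_cases h : x = y
  · subst h
    rw [if_pos rfl, Finset.sum_eq_single_of_mem x (Finset.mem_univ _)]
    · simp [Matrix.diag]
    · intro z _ hz
      simp [Matrix.diag, Matrix.single_apply_of_row_ne hz.symm]
  · rw [if_neg h]
    refine Finset.sum_eq_zero fun z _ => ?_
    simp only [Matrix.diag]
    exact Matrix.single_apply_of_ne _ _ _ _ _ (fun ⟨h1, h2⟩ => h (h1.trans h2.symm))

lemma trace_allOnes : Matrix.trace (allOnes X) = (Fintype.card X : ℂ) := by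
  rw [Matrix.trace]
  simp [Matrix.diag, allOnes, Finset.card_univ]

lemma trace_cyc (he : IsEnum B y₀ enum) (ha : a ∈ B.rels) (had : a ≠ diagRel Y)
    (hb : b ∈ B.rels) (hbd : b ≠ diagRel Y) (k : Fin 3) :
    Matrix.trace (cyc enum a b k) = if a = b ∧ k = 0 then 3 else 0 := by
  rw [cyc, Matrix.trace_sum]
  by_cases hab : a = b
  · subst hab
    by_cases hk : k = 0
    · subst hk
      rw [if_pos ⟨rfl, rfl⟩]
      have : ∀ i : Fin 3, Matrix.trace (Matrix.single (enum a i) (enum a (i + 0)) (1 : ℂ)) = 1 := by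
        intro i
        rw [add_zero, trace_std, if_pos rfl]
      rw [Finset.sum_congr rfl fun i _ => this i]
      simp
    · rw [if_neg (fun h => hk h.2)]
      refine Finset.sum_eq_zero fun i _ => ?_
      rw [trace_std, if_neg]
      intro h
      have := enum_inj he ha had h
      exact hk (by simpa using this.symm)
  · rw [if_neg (fun h => hab h.1)]
    refine Finset.sum_eq_zero fun i _ => ?_
    rw [trace_std, if_neg (enum_ne_enum he ha had hb hbd hab i (i + k))]

lemma trace_Mblock (he : IsEnum B y₀ enum) (ha : a ∈ B.rels) (had : a ≠ diagRel Y)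
    (hb : b ∈ B.rels) (hbd : b ≠ diagRel Y) :
    Matrix.trace (Mblock enum a b) = if a = b then 3 else 0 := by
  rw [Mblock, Matrix.trace_add, Matrix.trace_add, Matrix.trace_smul, Matrix.trace_smul,
    trace_cyc he ha had hb hbd, trace_cyc he ha had hb hbd, trace_cyc he ha had hb hbd]
  by_cases hab : a = b
  · rw [if_pos hab, if_pos ⟨hab, rfl⟩, if_neg (fun h => by simpa using h.2),
      if_neg (fun h => by simpa using h.2)]
    simp
  · rw [if_neg hab, if_neg (fun h => hab h.1), if_neg (fun h => hab h.1),
      if_neg (fun h => hab h.1)]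
    simp

lemma trace_Gmat (hX : Nonempty X) (he : IsEnum B y₀ enum)
    (ha : a ∈ B.rels) (had : a ≠ diagRel Y) (hb : b ∈ B.rels) (hbd : b ≠ diagRel Y) :
    Matrix.trace (Gmat X enum a b) = if a = b then 1 else 0 := by
  have hN := card_ne_zero_of_nonempty (X := X) hX
  rw [Gmat_eq, Matrix.trace_smul, Matrix.trace_kronecker, trace_allOnes,
    trace_Mblock he ha had hb hbd]
  by_cases hab : a = b
  · rw [if_pos hab, if_pos hab, smul_eq_mul]
    field_simp
  · rw [if_neg hab, if_neg hab]
    simp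

end TraceFacts
section Statements

variable {X Y : Type*} [Fintype X] [DecidableEq X] [Fintype Y] [DecidableEq Y]

theorem stmt11 (A : AssocScheme X) (B : AssocScheme Y) (h3 : ThreeEquivalenced B)
    (hT : 2 < B.rels.card) (x₀ : X) (y₀ : Y)
    (enum : Finset (Y × Y) → Fin 3 → Y) (hwo : IsWellOrdering B y₀ enum) :
    (∀ a ∈ wreathTerw A B x₀ y₀, ∀ m ∈ Submodule.span ℂ (GmatSet X B enum),
      a * m ∈ Submodule.span ℂ (GmatSet X B enum) ∧
      m * a ∈ Submodule.span ℂ (GmatSet X B enum)) ∧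
    (∀ t ∈ B.rels.erase (diagRel Y), ∀ t' ∈ B.rels.erase (diagRel Y),
      ∀ t'' ∈ B.rels.erase (diagRel Y), ∀ t''' ∈ B.rels.erase (diagRel Y),
      Gmat X enum t t' * Gmat X enum t''' t'' =
        if t' = t''' then Gmat X enum t t'' else 0) ∧
    ∃ φ : Matrix (X × Y) (X × Y) ℂ →ₗ[ℂ]
        Matrix ↥(B.rels.erase (diagRel Y)) ↥(B.rels.erase (diagRel Y)) ℂ,
      (∀ t t' : ↥(B.rels.erase (diagRel Y)),
        φ (Gmat X enum ↑t ↑t') = Matrix.single t t' 1) ∧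
      Set.InjOn φ (Submodule.span ℂ (GmatSet X B enum)) ∧
      φ '' (Submodule.span ℂ (GmatSet X B enum)) = Set.univ ∧
      ∀ a ∈ Submodule.span ℂ (GmatSet X B enum),
        ∀ b ∈ Submodule.span ℂ (GmatSet X B enum), φ (a * b) = φ a * φ b := by
  classical
  obtain ⟨hwoE, -⟩ := id hwo
  have hX : Nonempty X := assoc_nonempty A
  have hmem : ∀ t ∈ B.rels.erase (diagRel Y), t ∈ B.rels ∧ t ≠ diagRel Y := fun t ht =>
    ⟨Finset.mem_of_mem_erase ht, Finset.ne_of_mem_erase ht⟩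
  have hGI : ∀ t ∈ B.rels.erase (diagRel Y), ∀ t' ∈ B.rels.erase (diagRel Y),
      Gmat X enum t t' ∈ Submodule.span ℂ (GmatSet X B enum) := fun t ht t' ht' =>
    Submodule.subset_span ⟨t, ht, t', ht', rfl⟩
  -- PART 2
  have part2 : ∀ t ∈ B.rels.erase (diagRel Y), ∀ t' ∈ B.rels.erase (diagRel Y),
      ∀ t'' ∈ B.rels.erase (diagRel Y), ∀ t''' ∈ B.rels.erase (diagRel Y),
      Gmat X enum t t' * Gmat X enum t''' t'' =
        if t' = t''' then Gmat X enum t t'' else 0 :=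
    fun t ht t' ht' t'' ht'' t''' ht''' =>
      Gmat_mul_Gmat hX hwoE (hmem t' ht').1 (hmem t' ht').2
        (hmem t''' ht''').1 (hmem t''' ht''').2
  -- PART 1
  have hgen : ∀ g ∈ wreathGens A B x₀ y₀, ∀ t ∈ B.rels.erase (diagRel Y),
      ∀ t' ∈ B.rels.erase (diagRel Y),
      g * Gmat X enum t t' ∈ Submodule.span ℂ (GmatSet X B enum) ∧
      Gmat X enum t t' * g ∈ Submodule.span ℂ (GmatSet X B enum) := by
    rintro g hg t ht t' ht'
    obtain ⟨ht1, ht2⟩ := hmem t ht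
    obtain ⟨ht'1, ht'2⟩ := hmem t' ht'
    rcases hg with ((⟨s, hs, rfl⟩ | ⟨s, hs, rfl⟩) | ⟨u, hu, hud, rfl⟩) | ⟨u, hu, hud, rfl⟩
    · obtain ⟨c, hc⟩ := adjMat_mul_allOnes A hs
      obtain ⟨c', hc'⟩ := allOnes_mul_adjMat A hs
      constructor
      · rw [tilde_mul_Gmat hc]
        exact Submodule.smul_mem _ _ (hGI t ht t' ht')
      · rw [Gmat_mul_tilde hc']
        exact Submodule.smul_mem _ _ (hGI t ht t' ht')
    · constructor
      · rw [epsx_mul_Gmat hwoE ht1 ht2]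
        exact Submodule.zero_mem _
      · rw [Gmat_mul_epsx hwoE ht'1 ht'2]
        exact Submodule.zero_mem _
    · constructor
      · rw [bar_mul_Gmat hwo hu ht1 ht2 ht'1 ht'2]
        exact Submodule.sum_mem _ fun u' hu' =>
          Submodule.smul_mem _ _ (hGI u' hu' t' ht')
      · rw [Gmat_mul_bar hwo hu ht1 ht2 ht'1 ht'2]
        exact Submodule.sum_mem _ fun u' hu' =>
          Submodule.smul_mem _ _ (hGI t ht u' hu')
    · constructor
      · rw [epsy_mul_Gmat hwoE hu hud ht1 ht2]
        split_ifs
        · exact hGI t ht t' ht'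
        · exact Submodule.zero_mem _
      · rw [Gmat_mul_epsy hwoE hu hud ht'1 ht'2]
        split_ifs
        · exact hGI t ht t' ht'
        · exact Submodule.zero_mem _
  have hgen' : ∀ g ∈ wreathGens A B x₀ y₀, ∀ m ∈ Submodule.span ℂ (GmatSet X B enum),
      g * m ∈ Submodule.span ℂ (GmatSet X B enum) ∧
      m * g ∈ Submodule.span ℂ (GmatSet X B enum) := by
    intro g hg m hm
    induction hm using Submodule.span_induction with
    | mem x hx =>
      obtain ⟨t, ht, t', ht', rfl⟩ := hx
      exact hgen g hg t ht t' ht'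
    | zero => simp
    | add x y hx hy px py =>
      exact ⟨by rw [mul_add]; exact Submodule.add_mem _ px.1 py.1,
             by rw [add_mul]; exact Submodule.add_mem _ px.2 py.2⟩
    | smul c x hx px =>
      exact ⟨by rw [mul_smul_comm]; exact Submodule.smul_mem _ _ px.1,
             by rw [smul_mul_assoc]; exact Submodule.smul_mem _ _ px.2⟩
  have part1 : ∀ a ∈ wreathTerw A B x₀ y₀, ∀ m ∈ Submodule.span ℂ (GmatSet X B enum),
      a * m ∈ Submodule.span ℂ (GmatSet X B enum) ∧
      m * a ∈ Submodule.span ℂ (GmatSet X B enum) := by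
    intro a ha
    induction ha using Algebra.adjoin_induction with
    | mem g hg => exact hgen' g hg
    | algebraMap r =>
      intro m hm
      constructor
      · rw [← Algebra.smul_def]
        exact Submodule.smul_mem _ _ hm
      · rw [← Algebra.commutes, ← Algebra.smul_def]
        exact Submodule.smul_mem _ _ hm
    | add x y hx hy px py =>
      intro m hm
      exact ⟨by rw [add_mul]; exact Submodule.add_mem _ (px m hm).1 (py m hm).1,
             by rw [mul_add]; exact Submodule.add_mem _ (px m hm).2 (py m hm).2⟩
    | mul x y hx hy px py =>
      intro m hm
      constructor
      · rw [mul_assoc]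
        exact (px _ (py m hm).1).1
      · rw [← mul_assoc]
        exact (py _ (px m hm).2).2
  refine ⟨part1, part2, ?_⟩
  -- PART 3
  set T3s := ↥(B.rels.erase (diagRel Y)) with hT3s
  set φ : Matrix (X × Y) (X × Y) ℂ →ₗ[ℂ] Matrix T3s T3s ℂ :=
    { toFun := fun M => Matrix.of fun t t' =>
        Matrix.trace (M * Gmat X enum (↑t' : Finset (Y × Y)) ↑t)
      map_add' := by
        intro M N
        ext t t'
        simp [Matrix.add_mul, Matrix.trace_add]
      map_smul' := by
        intro c M
        ext t t'
        simp [Matrix.smul_mul, Matrix.trace_smul] } with hφdef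
  have φapp : ∀ M (t t' : T3s), φ M t t' =
      Matrix.trace (M * Gmat X enum (↑t' : Finset (Y × Y)) ↑t) := fun M t t' => rfl
  have hφG : ∀ a b : T3s, φ (Gmat X enum ↑a ↑b) = Matrix.single a b 1 := by
    intro a b
    ext t t'
    rw [φapp, part2 ↑a a.2 ↑b b.2 ↑t t.2 ↑t' t'.2, Matrix.single]
    simp only [Matrix.of_apply]
    by_cases h1 : (↑b : Finset (Y × Y)) = ↑t'
    · rw [if_pos h1, trace_Gmat hX hwoE (hmem _ a.2).1 (hmem _ a.2).2
        (hmem _ t.2).1 (hmem _ t.2).2]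
      by_cases h2 : (↑a : Finset (Y × Y)) = ↑t
      · rw [if_pos h2, if_pos ⟨Subtype.coe_inj.mp h2, Subtype.coe_inj.mp h1⟩]
      · rw [if_neg h2, if_neg (fun h => h2 (congrArg _ h.1))]
    · rw [if_neg h1, Matrix.trace_zero, if_neg (fun h => h1 (congrArg _ h.2))]
  -- the inverse map
  set ψ : Matrix T3s T3s ℂ → Matrix (X × Y) (X × Y) ℂ :=
    fun N => ∑ p : T3s × T3s, N p.1 p.2 • Gmat X enum ↑p.1 ↑p.2 with hψdef
  have hψmem : ∀ N, ψ N ∈ Submodule.span ℂ (GmatSet X B enum) := fun N =>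
    Submodule.sum_mem _ fun p _ => Submodule.smul_mem _ _ (hGI _ p.1.2 _ p.2.2)
  have hφψ : ∀ N, φ (ψ N) = N := by
    intro N
    rw [hψdef]
    simp only
    rw [map_sum]
    have : ∀ p : T3s × T3s, φ (N p.1 p.2 • Gmat X enum ↑p.1 ↑p.2) =
        N p.1 p.2 • Matrix.single p.1 p.2 1 := by
      intro p
      rw [_root_.map_smul, hφG]
    rw [Finset.sum_congr rfl fun p _ => this p]
    ext t t'
    rw [Matrix.sum_apply]
    rw [Finset.sum_eq_single_of_mem (t, t') (Finset.mem_univ _)]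
    · simp
    · rintro ⟨u, v⟩ _ hne
      rw [Matrix.smul_apply, Matrix.single_apply_of_ne, smul_zero]
      rintro ⟨h1, h2⟩
      exact hne (Prod.ext h1 h2)
  have hspan : ∀ m ∈ Submodule.span ℂ (GmatSet X B enum), ∃ N, ψ N = m := by
    intro m hm
    induction hm using Submodule.span_induction with
    | mem x hx =>
      obtain ⟨t, ht, t', ht', rfl⟩ := hx
      refine ⟨Matrix.single ⟨t, ht⟩ ⟨t', ht'⟩ 1, ?_⟩
      rw [hψdef]
      simp only
      rw [Finset.sum_eq_single_of_mem (⟨t, ht⟩, ⟨t', ht'⟩) (Finset.mem_univ _)]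
      · rw [Matrix.single_apply_same, one_smul]
      · rintro ⟨u, v⟩ _ hne
        rw [Matrix.single_apply_of_ne, zero_smul]
        rintro ⟨h1, h2⟩
        exact hne (Prod.ext h1.symm h2.symm)
    | zero => exact ⟨0, by simp [hψdef]⟩
    | add x y hx hy px py =>
      obtain ⟨Nx, rfl⟩ := px
      obtain ⟨Ny, rfl⟩ := py
      refine ⟨Nx + Ny, ?_⟩
      rw [hψdef]
      simp only
      rw [← Finset.sum_add_distrib]
      refine Finset.sum_congr rfl fun p _ => ?_
      rw [Matrix.add_apply, add_smul]
    | smul c x hx px =>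
      obtain ⟨Nx, rfl⟩ := px
      refine ⟨c • Nx, ?_⟩
      rw [hψdef]
      simp only
      rw [Finset.smul_sum]
      refine Finset.sum_congr rfl fun p _ => ?_
      rw [Matrix.smul_apply, smul_smul, smul_eq_mul]
  have hψmul : ∀ Na Nb, ψ Na * ψ Nb = ψ (Na * Nb) := by
    intro Na Nb
    have hGψ : ∀ p1 p2 : T3s, Gmat X enum ↑p1 ↑p2 * ψ Nb =
        ∑ d : T3s, Nb p2 d • Gmat X enum ↑p1 ↑d := by
      intro p1 p2
      rw [hψdef]
      simp only
      rw [Finset.mul_sum]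
      rw [Fintype.sum_prod_type]
      rw [Finset.sum_eq_single_of_mem p2 (Finset.mem_univ _)]
      · refine Finset.sum_congr rfl fun d _ => ?_
        rw [mul_smul_comm, part2 ↑p1 p1.2 ↑p2 p2.2 ↑d d.2 ↑p2 p2.2, if_pos rfl]
      · intro q1 _ hq1
        refine Finset.sum_eq_zero fun d _ => ?_
        rw [mul_smul_comm, part2 ↑p1 p1.2 ↑p2 p2.2 ↑d d.2 ↑q1 q1.2,
          if_neg (fun h => hq1 (Subtype.coe_inj.mp h).symm), smul_zero]
    rw [hψdef]
    simp only
    rw [Finset.sum_mul]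
    have step : ∀ p : T3s × T3s,
        (Na p.1 p.2 • Gmat X enum ↑p.1 ↑p.2) * (∑ q : T3s × T3s, Nb q.1 q.2 • Gmat X enum ↑q.1 ↑q.2) =
        ∑ d : T3s, (Na p.1 p.2 * Nb p.2 d) • Gmat X enum ↑p.1 ↑d := by
      intro p
      rw [smul_mul_assoc]
      have := hGψ p.1 p.2
      rw [hψdef] at this
      simp only at this
      rw [this, Finset.smul_sum]
      refine Finset.sum_congr rfl fun d _ => ?_
      rw [smul_smul]
    rw [Finset.sum_congr rfl fun p _ => step p]
    rw [Fintype.sum_prod_type]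
    conv_rhs =>
      rw [Fintype.sum_prod_type]
    refine Finset.sum_congr rfl fun r1 _ => ?_
    rw [Finset.sum_comm]
    refine Finset.sum_congr rfl fun r2 _ => ?_
    rw [Matrix.mul_apply, Finset.sum_smul]
  refine ⟨φ, hφG, ?_, ?_, ?_⟩
  · intro m hm m' hm' h
    obtain ⟨N, rfl⟩ := hspan m hm
    obtain ⟨N', rfl⟩ := hspan m' hm'
    rw [hφψ, hφψ] at h
    rw [h]
  · apply Set.eq_univ_of_forall
    intro N
    exact ⟨ψ N, hψmem N, hφψ N⟩
  · intro a ha b hb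
    obtain ⟨Na, rfl⟩ := hspan a ha
    obtain ⟨Nb, rfl⟩ := hspan b hb
    rw [hψmul, hφψ, hφψ, hφψ]

end Statements
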